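/- Define c_j = ((j+1)(j+2)/(2j+1)) · ((j−1)!)⁴ / ((2j)!)³ for integers j ≥ 1, and let μ = e²/2⁶. Then there exists a constant C > 0 such that for every integer j ≥ 1, c_j ≤ C · μ^j / j^{2j+5/2}, where real powers are taken as Real.rpow and e is Euler's number. -/

import Mathlib

open Real Filter Nat

lemma sqrtPi_le_stirlingSeq' (n : ℕ) : Real.sqrt π ≤ Stirling.stirlingSeq (n + 1) :=
  Stirling.stirlingSeq'_antitone.le_of_tendsto
    ((Filter.tendsto_add_atTop_iff_nat 1).mpr Stirling.tendsto_stirlingSeq_sqrt_pi) n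

lemma factorial_lower {n : ℕ} (hn : 1 ≤ n) :
    Real.sqrt π * (Real.sqrt (2*n) * ((n:ℝ)/Real.exp 1)^n) ≤ (n ! : ℝ) := by
  have hn0 : (0:ℝ) < n := by exact_mod_cast hn
  have hd : 0 < Real.sqrt (2*n) * ((n:ℝ)/Real.exp 1)^n := by positivity
  have h := sqrtPi_le_stirlingSeq' (n - 1)
  rw [show n - 1 + 1 = n by omega] at h
  rw [show Stirling.stirlingSeq n
      = (n ! : ℝ) / (Real.sqrt (2*n) * ((n:ℝ)/Real.exp 1)^n) from rfl] at h
  exact (le_div_iff₀ hd).mp h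

lemma factorial_upper {n : ℕ} (hn : 1 ≤ n) :
    (n ! : ℝ) ≤ (Real.exp 1 / Real.sqrt 2) * (Real.sqrt (2*n) * ((n:ℝ)/Real.exp 1)^n) := by
  have hn0 : (0:ℝ) < n := by exact_mod_cast hn
  have hd : 0 < Real.sqrt (2*n) * ((n:ℝ)/Real.exp 1)^n := by positivity
  have h := Stirling.stirlingSeq'_antitone (Nat.zero_le (n-1))
  simp only [Function.comp_apply] at h
  rw [show Nat.succ (n - 1) = n by omega, Nat.succ_eq_add_one, zero_add,
    Stirling.stirlingSeq_one] at h
  rw [show Stirling.stirlingSeq n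
      = (n ! : ℝ) / (Real.sqrt (2*n) * ((n:ℝ)/Real.exp 1)^n) from rfl] at h
  exact (div_le_iff₀ hd).mp h

theorem gauss_lobatto_constant_bound :
    ∃ C > 0, ∀ j : ℕ, 1 ≤ j →
      ((j : ℝ) + 1) * ((j : ℝ) + 2) / (2 * (j : ℝ) + 1) *
          (Nat.factorial (j - 1) : ℝ) ^ 4 / (Nat.factorial (2 * j) : ℝ) ^ 3 ≤
        C * (Real.exp 1 ^ 2 / 2 ^ 6) ^ (j : ℝ) / (j : ℝ) ^ (2 * (j : ℝ) + 5 / 2) := by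
  refine ⟨3 * Real.exp 1 ^ 4 / (8 * π * Real.sqrt π), by positivity, ?_⟩
  intro j hj
  set x : ℝ := (j : ℝ) with hxdef
  have hx1 : (1:ℝ) ≤ x := by rw [hxdef]; exact_mod_cast hj
  have hx0 : (0:ℝ) < x := by linarith
  have he : (0:ℝ) < Real.exp 1 := Real.exp_pos 1
  set s : ℝ := Real.sqrt x with hsdef
  have hs0 : 0 < s := Real.sqrt_pos.mpr hx0
  have hs2 : s ^ 2 = x := Real.sq_sqrt hx0.le
  set a : ℝ := x ^ j with hadef
  set b : ℝ := Real.exp 1 ^ j with hbdef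
  set c : ℝ := (2:ℝ) ^ j with hcdef
  have ha0 : 0 < a := pow_pos hx0 j
  have hb0 : 0 < b := pow_pos he j
  have hc0 : 0 < c := pow_pos two_pos j
  have hpisqrt : 0 < Real.sqrt π := Real.sqrt_pos.mpr pi_pos
  -- (j-1)! = j!/x
  have hfacN : j * (j-1)! = j ! := Nat.mul_factorial_pred (by omega)
  have hfacR : x * ((j-1)! : ℝ) = (j ! : ℝ) := by rw [hxdef]; exact_mod_cast hfacN
  have hfac : ((j - 1)! : ℝ) = (j ! : ℝ) / x := by
    rw [eq_div_iff hx0.ne']; linear_combination hfacR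
  -- upper bound on (j!)^4
  have hF1 : (j ! : ℝ) ≤ (Real.exp 1 / Real.sqrt 2) * (Real.sqrt (2*x) * (a/b)) := by
    have h := factorial_upper hj
    rw [div_pow] at h
    exact h
  have hsq2 : (Real.sqrt 2 : ℝ)^4 = 4 := by
    rw [show (4:ℕ) = 2*2 from rfl, pow_mul, Real.sq_sqrt (by norm_num : (0:ℝ) ≤ 2)]
    norm_num
  have hsq2x : (Real.sqrt (2*x))^4 = 4*x^2 := by
    rw [show (4:ℕ) = 2*2 from rfl, pow_mul, Real.sq_sqrt (by positivity : (0:ℝ) ≤ 2*x)]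
    ring
  have hF1p : (j ! : ℝ)^4 ≤ Real.exp 1^4 * x^2 * (a/b)^4 := by
    calc (j ! : ℝ)^4 ≤ ((Real.exp 1 / Real.sqrt 2) * (Real.sqrt (2*x) * (a/b)))^4 := by
          apply pow_le_pow_left₀ (Nat.cast_nonneg _) hF1
      _ = Real.exp 1^4 * x^2 * (a/b)^4 := by
          rw [mul_pow, mul_pow, div_pow, hsq2, hsq2x]; ring
  -- lower bound on ((2j)!)^3
  have hF2 : Real.sqrt π * (Real.sqrt (2*(2*x)) * (c*a/b)^2) ≤ ((2*j)! : ℝ) := by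
    have h := factorial_lower (n := 2*j) (by omega)
    have h2 : (((2*j : ℕ)):ℝ) = 2*x := by push_cast [hxdef]; ring
    rw [h2] at h
    have h3 : ((2*x)/Real.exp 1)^(2*j) = (c*a/b)^2 := by
      rw [mul_comm 2 j, pow_mul]
      congr 1
      rw [div_pow, mul_pow, hcdef, hadef, hbdef]
    rw [h3] at h
    exact h
  have h4s : Real.sqrt (2*(2*x)) = 2 * s := by
    rw [show 2*(2*x) = 4*x by ring, show (4:ℝ) = 2^2 by norm_num,
      Real.sqrt_mul (by positivity) x, Real.sqrt_sq (by norm_num : (0:ℝ) ≤ 2)]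
  have hpi3 : Real.sqrt π ^ 3 = π * Real.sqrt π := by
    rw [pow_succ, Real.sq_sqrt pi_pos.le]
  have hF2p : π * Real.sqrt π * (8 * x * s) * ((c*a/b)^2)^3 ≤ ((2*j)! : ℝ)^3 := by
    calc π * Real.sqrt π * (8 * x * s) * ((c*a/b)^2)^3
        = (Real.sqrt π * (Real.sqrt (2*(2*x)) * (c*a/b)^2))^3 := by
          rw [h4s, mul_pow, mul_pow, hpi3, show (2*s)^3 = 8*(s^2)*s by ring, hs2]; ring
      _ ≤ ((2*j)! : ℝ)^3 := pow_le_pow_left₀ (by positivity) hF2 3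
  -- numerator coefficient bound
  have hA1 : (x + 1) * (x + 2) / (2 * x + 1) ≤ 3 * x := by
    rw [div_le_iff₀ (by linarith)]
    nlinarith
  -- rewrite the RHS
  have hrpow1 : (Real.exp 1 ^ 2 / 2 ^ 6 : ℝ) ^ (x : ℝ) = b^2 / c^6 := by
    rw [hxdef, Real.rpow_natCast, div_pow, hbdef, hcdef,
      ← pow_mul, ← pow_mul, ← pow_mul, ← pow_mul, mul_comm 2 j, mul_comm 6 j]
  have hrpow2 : x ^ (2 * x + 5 / 2 : ℝ) = a^2 * (x^2 * s) := by
    rw [show (2 * x + 5 / 2 : ℝ) = 2*x + 2 + 1/2 by ring,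
      Real.rpow_add hx0, Real.rpow_add hx0]
    have e1 : x ^ (2 * x : ℝ) = a^2 := by
      rw [hxdef, show (2 * (j:ℝ) : ℝ) = ((2*j : ℕ) : ℝ) by push_cast; ring,
        Real.rpow_natCast, mul_comm 2 j, pow_mul, hadef]
    have e2 : x ^ (2 : ℝ) = x^2 := Real.rpow_two x
    have e3 : x ^ (1/2 : ℝ) = s := by
      rw [hsdef, Real.sqrt_eq_rpow]
    rw [e1, e2, e3]; ring
  rw [hrpow1, hrpow2, hfac, div_pow]
  calc (x + 1) * (x + 2) / (2 * x + 1) * ((j ! : ℝ)^4 / x^4) / ((2*j)! : ℝ)^3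
      ≤ (3*x) * ((Real.exp 1^4 * x^2 * (a/b)^4) / x^4)
          / (π * Real.sqrt π * (8 * x * s) * ((c*a/b)^2)^3) := by
        apply div_le_div₀ (by positivity) ?_ (by positivity) hF2p
        apply mul_le_mul hA1 ?_ (by positivity) (by linarith)
        apply div_le_div_of_nonneg_right ?_ (by positivity)
        · exact hF1p
    _ = 3 * Real.exp 1 ^ 4 / (8 * π * Real.sqrt π) * (b^2/c^6) / (a^2 * (x^2 * s)) := by
        field_simp
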